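/- For all A, B ∈ ℝ, the Weierstrass ternary cubic form f = x³ + A·x·z² + B·z³ − y²·z satisfies the identity of ternary cubic forms H(H(f)) = 12288·(−3A)²·f + 512·(−27B)·H(f); that is, the invariants of f are I(f) = −3A and J(f) = −27B. -/
import Mathlib


open MvPolynomial

/-- The Hessian of a ternary form: the determinant of the matrix of second partials. -/
noncomputable def hess {R : Type*} [CommRing R] (f : MvPolynomial (Fin 3) R) :
    MvPolynomial (Fin 3) R :=
  Matrix.det (Matrix.of fun i j => pderiv i (pderiv j f))

/-- The exponent vectors of the ten monomials of a ternary cubic form. -/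
def expo : Fin 10 → Fin 3 → ℕ :=
  ![![3,0,0], ![0,3,0], ![0,0,3], ![2,1,0], ![2,0,1],
    ![1,2,0], ![0,2,1], ![1,0,2], ![0,1,2], ![1,1,1]]

/-- The ternary cubic form with coefficient vector `c : Fin 10 → R`. -/
noncomputable def cubic {R : Type*} [CommRing R] (c : Fin 10 → R) : MvPolynomial (Fin 3) R :=
  ∑ k : Fin 10, C (c k) * ∏ i : Fin 3, X i ^ expo k i

/-- The coefficient vector of the Weierstrass cubic `x³ + A·x·z² + B·z³ − y²·z`. -/
noncomputable def wcoeffs {R : Type*} [CommRing R] (A B : R) : Fin 10 → R :=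
  ![1, 0, B, 0, 0, 0, -1, A, 0, 0]

namespace Aux

lemma C_ofNat' (n : ℕ) [n.AtLeastTwo] :
    (C (no_index (OfNat.ofNat n) : ℝ) : MvPolynomial (Fin 3) ℝ) = OfNat.ofNat n :=
  map_ofNat _ n

lemma fin3_mk2 (h : 2 < 3) : (⟨2, h⟩ : Fin 3) = 2 := rfl

lemma pderiv_pow' {i : Fin 3} {f : MvPolynomial (Fin 3) ℝ} {n : ℕ} :
    pderiv i (f ^ n) = C (n : ℝ) * f ^ (n - 1) * pderiv i f := by
  rw [pderiv_pow, map_natCast (C : ℝ →+* MvPolynomial (Fin 3) ℝ) n]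

noncomputable def wf (A B : ℝ) : MvPolynomial (Fin 3) ℝ :=
  X 0 ^ 3 + C A * X 0 * X 2 ^ 2 + C B * X 2 ^ 3 - X 1 ^ 2 * X 2

lemma cubic_w (A B : ℝ) : cubic (wcoeffs A B) = wf A B := by
  simp [cubic, wcoeffs, expo, wf, Fin.sum_univ_succ, Fin.prod_univ_succ]
  ring

noncomputable def wg (A B : ℝ) : MvPolynomial (Fin 3) ℝ :=
  C (-24*A) * X 0 ^ 2 * X 2 + C (-24 : ℝ) * X 0 * X 1 ^ 2 + C (-72*B) * X 0 * X 2 ^ 2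
    + C (8*A^2) * X 2 ^ 3

/-- second partials of wf -/
lemma wf_d (A B : ℝ) (i j : Fin 3) :
    pderiv i (pderiv j (wf A B)) =
      ![![C 6 * X 0, 0, C (2*A) * X 2],
        ![0, C (-2 : ℝ) * X 2, C (-2 : ℝ) * X 1],
        ![C (2*A) * X 2, C (-2 : ℝ) * X 1, C (2*A) * X 0 + C (6*B) * X 2]] i j := by
  fin_cases i <;> fin_cases j <;>
    · simp only [wf, map_add, map_sub, map_neg, pderiv_mul, pderiv_pow', pderiv_C,
        pderiv_X_self, Fin.mk_zero, Fin.mk_one, fin3_mk2,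
        pderiv_X_of_ne (show (1:Fin 3) ≠ 0 by decide),
        pderiv_X_of_ne (show (2:Fin 3) ≠ 0 by decide),
        pderiv_X_of_ne (show (0:Fin 3) ≠ 1 by decide),
        pderiv_X_of_ne (show (2:Fin 3) ≠ 1 by decide),
        pderiv_X_of_ne (show (0:Fin 3) ≠ 2 by decide),
        pderiv_X_of_ne (show (1:Fin 3) ≠ 2 by decide),
        Matrix.cons_val_zero, Matrix.cons_val_one, Matrix.head_cons, Matrix.cons_val_two,
        Matrix.tail_cons, Fin.isValue, mul_one, one_mul, mul_zero, zero_mul, add_zero,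
        zero_add, neg_zero, sub_zero, zero_sub, Nat.cast_ofNat, Nat.cast_one, C_1, Nat.reduceSub,
        C_mul, C_neg, C_pow, mul_neg, neg_mul, neg_neg]
      try simp only [map_ofNat (C : ℝ →+* MvPolynomial (Fin 3) ℝ), C_1, C_ofNat']
      try norm_num
      try ring

/-- second partials of wg -/
lemma wg_d (A B : ℝ) (i j : Fin 3) :
    pderiv i (pderiv j (wg A B)) =
      ![![C (-48*A) * X 2, C (-48 : ℝ) * X 1, C (-48*A) * X 0 + C (-144*B) * X 2],
        ![C (-48 : ℝ) * X 1, C (-48 : ℝ) * X 0, 0],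
        ![C (-48*A) * X 0 + C (-144*B) * X 2, 0, C (-144*B) * X 0 + C (48*A^2) * X 2]] i j := by
  fin_cases i <;> fin_cases j <;>
    · simp only [wg, map_add, map_sub, map_neg, pderiv_mul, pderiv_pow', pderiv_C,
        pderiv_X_self, Fin.mk_zero, Fin.mk_one, fin3_mk2,
        pderiv_X_of_ne (show (1:Fin 3) ≠ 0 by decide),
        pderiv_X_of_ne (show (2:Fin 3) ≠ 0 by decide),
        pderiv_X_of_ne (show (0:Fin 3) ≠ 1 by decide),
        pderiv_X_of_ne (show (2:Fin 3) ≠ 1 by decide),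
        pderiv_X_of_ne (show (0:Fin 3) ≠ 2 by decide),
        pderiv_X_of_ne (show (1:Fin 3) ≠ 2 by decide),
        Matrix.cons_val_zero, Matrix.cons_val_one, Matrix.head_cons, Matrix.cons_val_two,
        Matrix.tail_cons, Fin.isValue, mul_one, one_mul, mul_zero, zero_mul, add_zero,
        zero_add, neg_zero, sub_zero, zero_sub, Nat.cast_ofNat, Nat.cast_one, C_1, Nat.reduceSub,
        C_mul, C_neg, C_pow, mul_neg, neg_mul, neg_neg]
      try simp only [map_ofNat (C : ℝ →+* MvPolynomial (Fin 3) ℝ), C_1, C_ofNat']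
      try norm_num
      try ring

lemma hess_wf (A B : ℝ) : hess (wf A B) = wg A B := by
  unfold hess
  rw [Matrix.det_fin_three]
  simp only [Matrix.of_apply, wf_d]
  simp only [wg, Matrix.cons_val_zero, Matrix.cons_val_one, Matrix.head_cons,
    Matrix.cons_val_two, Matrix.tail_cons, C_mul, C_neg, map_ofNat, C_pow]
  ring

lemma hess_wg (A B : ℝ) :
    hess (wg A B) =
      12288 * C ((-3 * A)) ^ 2 * wf A B + 512 * C (-27 * B) * wg A B := by
  unfold hess
  rw [Matrix.det_fin_three]
  simp only [Matrix.of_apply, wg_d]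
  simp only [wf, wg, Matrix.cons_val_zero, Matrix.cons_val_one, Matrix.head_cons,
    Matrix.cons_val_two, Matrix.tail_cons, C_mul, C_neg, map_ofNat, C_pow]
  ring

end Aux

/-- For all `A, B ∈ ℝ`, the Weierstrass ternary cubic form `f = x³ + A·x·z² + B·z³ − y²·z`
satisfies `H(H(f)) = 12288·(−3A)²·f + 512·(−27B)·H(f)`; that is, `I(f) = −3A` and
`J(f) = −27B`. -/
theorem stmt2 (A B : ℝ) :
    hess (hess (cubic (wcoeffs A B))) =
      12288 * C ((-3 * A)) ^ 2 * cubic (wcoeffs A B)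
        + 512 * C (-27 * B) * hess (cubic (wcoeffs A B)) := by
  rw [Aux.cubic_w, Aux.hess_wf, Aux.hess_wg]
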